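/- Let κ be a singular cardinal of cofinality ω, let (κ_n)_{n<ω} be an increasing sequence of infinite cardinals cofinal in κ, and let ρ be a function assigning to each pair α ≤ β < κ⁺ an ordinal ρ(α,β) < κ, satisfying: (1) for all ordinals ν < κ and all β < κ⁺, |{α < β : ρ(α,β) ≤ ν}| < ν⁺, where ν⁺ is the least cardinal greater than |ν|; and (2) for all α < β < γ < κ⁺, ρ(α,β) ≤ max(ρ(α,γ), ρ(β,γ)) and ρ(α,γ) ≤ max(ρ(α,β), ρ(β,γ)). Define P_ν(β) = {α < β : ρ(α,β) ≤ ν} and f_β(n) = ot(P_{κ_n}(β)). Then every γ < κ⁺ of uncountable cofinality is a good point of (f_β)_{β<κ⁺}: there exist an unbounded A ⊆ γ and m < ω such that (f_ξ(n))_{ξ∈A} is strictly increasing for all n ≥ m. -/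
import Mathlib


open Cardinal Set

universe u v

noncomputable section

/-- Eventual domination: `f n < g n` for all but finitely many `n`. -/
def EvLT (f g : ℕ → Ordinal.{u}) : Prop := {n | ¬ f n < g n}.Finite

/-- `C` is a club (closed and unbounded) subset of the ordinal `α`: every member of `C`
is below `α`, `C` is unbounded in `α`, and `C` is closed under suprema of its nonempty
subsets whose supremum is below `α`. -/
def IsClubIn (C : Set Ordinal.{u}) (α : Ordinal.{u}) : Prop :=
  (∀ β ∈ C, β < α) ∧ (∀ β < α, ∃ γ ∈ C, β ≤ γ) ∧
    (∀ Y ⊆ C, Y.Nonempty → sSup Y < α → sSup Y ∈ C)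

/-- The set of limit points of a set `C` of ordinals: those `β > 0` with `sup (C ∩ β) = β`. -/
def limPts (C : Set Ordinal.{u}) : Set Ordinal.{u} :=
  {β | 0 < β ∧ sSup (C ∩ Set.Iio β) = β}

/-- The order type of a set of ordinals. -/
def otype (X : Set Ordinal.{u}) : Ordinal.{u + 1} :=
  Ordinal.type ((· < ·) : X → X → Prop)

/-- `P_ν(β) = {α < β : ρ(α, β) ≤ ν}`. -/
def Pset (ρ : Ordinal.{u} → Ordinal.{u} → Ordinal.{u}) (ν β : Ordinal.{u}) :
    Set Ordinal.{u} :=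
  {α | α < β ∧ ρ α β ≤ ν}

/-- `f_β(n) = ot(P_{κn n}(β))`, the order type of `P_{κn n}(β)`. -/
def rhoFn (ρ : Ordinal.{u} → Ordinal.{u} → Ordinal.{u}) (κn : ℕ → Cardinal.{u})
    (β : Ordinal.{u}) (n : ℕ) : Ordinal.{u + 1} :=
  otype (Pset ρ (κn n).ord β)

/-- `β` is a good point of the sequence `f`: there are an unbounded `A ⊆ β` and `m < ω`
such that `ξ ↦ f ξ n` is strictly increasing on `A` for all `n ≥ m`. -/
def IsGoodPt (f : Ordinal.{u} → ℕ → Ordinal.{v}) (β : Ordinal.{u}) : Prop :=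
  ∃ A : Set Ordinal.{u}, (∀ ξ ∈ A, ξ < β) ∧ (∀ γ < β, ∃ ξ ∈ A, γ ≤ ξ) ∧
    ∃ m : ℕ, ∀ n, m ≤ n → StrictMonoOn (fun ξ => f ξ n) A

/-- `β` is a better point of the sequence `f`: there is a club `C ⊆ β` such that for every
limit point `γ` of `C` there is `m < ω` with `f ξ n < f γ n` for all `ξ ∈ C ∩ γ`, `n ≥ m`. -/
def IsBetterPt (f : Ordinal.{u} → ℕ → Ordinal.{v}) (β : Ordinal.{u}) : Prop :=
  ∃ C : Set Ordinal.{u}, IsClubIn C β ∧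
    ∀ γ ∈ limPts C, ∃ m : ℕ, ∀ ξ ∈ C ∩ Set.Iio γ, ∀ n, m ≤ n → f ξ n < f γ n

/-- `β` is a very good point of the sequence `f`: there are a club `C ⊆ β` and `m < ω`
such that `ξ ↦ f ξ n` is strictly increasing on `C` for all `n ≥ m`. -/
def IsVeryGoodPt (f : Ordinal.{u} → ℕ → Ordinal.{v}) (β : Ordinal.{u}) : Prop :=
  ∃ C : Set Ordinal.{u}, IsClubIn C β ∧
    ∃ m : ℕ, ∀ n, m ≤ n → StrictMonoOn (fun ξ => f ξ n) C

/-- Inclusion of sets of ordinals gives an inequality of order types. -/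
theorem otype_le_otype {S T : Set Ordinal.{u}} (h : S ⊆ T) : otype S ≤ otype T := by
  refine RelEmbedding.ordinal_type_le ⟨⟨fun x => ⟨x.1, h x.2⟩, ?_⟩, Iff.rfl⟩
  intro a b hab
  simp only [Subtype.mk.injEq] at hab
  exact Subtype.ext hab

/-- If `S ⊆ T`, `t ∈ T` and every element of `S` is below `t`, then `otype S < otype T`. -/
theorem otype_lt_otype {S T : Set Ordinal.{u}} (h : S ⊆ T) {t : Ordinal.{u}} (ht : t ∈ T)
    (hb : ∀ s ∈ S, s < t) : otype S < otype T := by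
  have h1 : otype S ≤ otype (T ∩ Set.Iio t) :=
    otype_le_otype fun s hs => ⟨h hs, hb s hs⟩
  refine h1.trans_lt ?_
  have f : @PrincipalSeg (T ∩ Set.Iio t : Set Ordinal.{u}) T (· < ·) (· < ·) :=
    { toFun := fun x => ⟨x.1, x.2.1⟩
      inj' := by
        intro a b hab
        simp only [Subtype.mk.injEq] at hab
        exact Subtype.ext hab
      map_rel_iff' := Iff.rfl
      top := ⟨t, ht⟩
      mem_range_iff_rel' := by
        intro b
        constructor
        · rintro ⟨a, rfl⟩
          exact a.2.2
        · intro hbt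
          exact ⟨⟨b.1, b.2, hbt⟩, rfl⟩ }
  exact f.ordinal_type_lt

/-- Properties (1) and (2) of a `ρ`-function imply that every `γ < κ⁺` of uncountable
cofinality is a good point of `f β n = ot(P_{κn n}(β))`: there are an unbounded `A ⊆ γ`
and `m < ω` such that `ξ ↦ f ξ n` is strictly increasing on `A` for all `n ≥ m`. -/
theorem rhoFn_goodPt
    (κ : Cardinal.{u}) (hκ : ℵ₀ < κ) (hcof : κ.ord.cof = ℵ₀)
    (κn : ℕ → Cardinal.{u}) (hinf : ∀ n, ℵ₀ ≤ κn n) (hmono : StrictMono κn)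
    (hlt : ∀ n, κn n < κ) (hcofinal : ∀ c < κ, ∃ n, c ≤ κn n)
    (ρ : Ordinal.{u} → Ordinal.{u} → Ordinal.{u})
    (hρ : ∀ α β, α ≤ β → β < (Order.succ κ).ord → ρ α β < κ.ord)
    (h1 : ∀ ν < κ.ord, ∀ β < (Order.succ κ).ord,
      #(Pset ρ ν β) < Cardinal.lift.{u + 1, u} (Order.succ ν.card))
    (h2 : ∀ α β γ, α < β → β < γ → γ < (Order.succ κ).ord →
      ρ α β ≤ max (ρ α γ) (ρ β γ) ∧ ρ α γ ≤ max (ρ α β) (ρ β γ))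
    :
    ∀ γ < (Order.succ κ).ord, ℵ₀ < γ.cof → IsGoodPt (rhoFn ρ κn) γ := by
  intro γ hγ hcofγ
  -- every α < γ lies in some `Pset ρ (κn n).ord γ`
  have hcover : ∀ α < γ, ∃ n, α ∈ Pset ρ (κn n).ord γ := by
    intro α hα
    have hρα : ρ α γ < κ.ord := hρ α γ hα.le hγ
    have hcard : (ρ α γ).card < κ := Cardinal.lt_ord.1 hρα
    obtain ⟨n, hn⟩ := hcofinal _ hcard
    refine ⟨n + 1, hα, ?_⟩
    exact (Cardinal.lt_ord.2 (hn.trans_lt (hmono (Nat.lt_succ_self n)))).le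
  -- some `Pset ρ (κn m).ord γ` is unbounded in γ
  have hunb : ∃ m, ∀ b < γ, ∃ ξ ∈ Pset ρ (κn m).ord γ, b ≤ ξ := by
    by_contra hcon
    push_neg at hcon
    choose b hb hbd using hcon
    have hsup : (⨆ n, b n) < γ := by
      refine Ordinal.iSup_lt_ord_lift ?_ hb
      rwa [Cardinal.mk_denumerable, Cardinal.lift_aleph0]
    obtain ⟨n, hn⟩ := hcover _ hsup
    exact absurd (Ordinal.le_iSup b n) (not_le.2 (hbd n _ hn))
  obtain ⟨m, hm⟩ := hunb
  refine ⟨Pset ρ (κn m).ord γ, fun ξ hξ => hξ.1, hm, m, ?_⟩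
  intro n hn ξ hξ η hη hlt'
  have hκmn : (κn m).ord ≤ (κn n).ord := Cardinal.ord_le_ord.2 (hmono.monotone hn)
  -- ξ ∈ Pset ρ (κn n).ord η
  have hξη : ρ ξ η ≤ (κn n).ord := by
    have := (h2 ξ η γ hlt' hη.1 hγ).1
    exact this.trans ((max_le hξ.2 hη.2).trans hκmn)
  have hmem : ξ ∈ Pset ρ (κn n).ord η := ⟨hlt', hξη⟩
  have hsub : Pset ρ (κn n).ord ξ ⊆ Pset ρ (κn n).ord η := by
    rintro α ⟨hαξ, hραξ⟩
    refine ⟨hαξ.trans hlt', ?_⟩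
    have := (h2 α ξ η hαξ hlt' (hη.1.trans hγ)).2
    exact this.trans (max_le hραξ hξη)
  exact otype_lt_otype hsub hmem fun s hs => hs.1
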